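/- arXiv:1806.07337 — 12 statements merged into one kernel-verified Lean document; each statement's English description precedes it below -/
import Mathlib

section
/- Let ρ and Π be positive semidefinite n×n complex matrices and let L be a Hermitian n×n complex matrix. Then |Tr(ρΠL)|² ≤ Re(Tr(ρΠ)) · Re(Tr(ρLΠL)). -/
open Matrix
open scoped ComplexOrder
open scoped MatrixOrder

lemma inner_eq_trace {m : Type*} [Fintype m] [DecidableEq m] (A B : Matrix m m ℂ) :
    inner ℂ ((WithLp.equiv 2 ((m × m) → ℂ)).symm (fun p => A p.1 p.2))
      ((WithLp.equiv 2 ((m × m) → ℂ)).symm (fun p => B p.1 p.2)) = (Aᴴ * B).trace := by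
  simp only [trace, Matrix.diag, Matrix.mul_apply, PiLp.inner_apply, conjTranspose_apply,
    RCLike.inner_apply', starRingEnd_apply, WithLp.equiv_symm_apply, PiLp.toLp_apply]
  rw [Finset.sum_comm, ← Finset.univ_product_univ, Finset.sum_product]

lemma trace_cs {m : Type*} [Fintype m] [DecidableEq m] (A B : Matrix m m ℂ) :
    ‖(Aᴴ * B).trace‖ ^ 2 ≤ ((Aᴴ * A).trace).re * ((Bᴴ * B).trace).re := by
  classical
  set a := (WithLp.equiv 2 ((m × m) → ℂ)).symm (fun p => A p.1 p.2) with ha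
  set b := (WithLp.equiv 2 ((m × m) → ℂ)).symm (fun p => B p.1 p.2) with hb
  have hA : ((Aᴴ * A).trace).re = ‖a‖ ^ 2 := by
    rw [← inner_eq_trace A A, ← inner_self_eq_norm_sq (𝕜 := ℂ) a]; rfl
  have hB : ((Bᴴ * B).trace).re = ‖b‖ ^ 2 := by
    rw [← inner_eq_trace B B, ← inner_self_eq_norm_sq (𝕜 := ℂ) b]; rfl
  rw [hA, hB, ← inner_eq_trace A B]
  calc ‖(inner ℂ a b : ℂ)‖ ^ 2 = ‖(inner ℂ a b : ℂ)‖ ^ 2 := rfl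
    _ ≤ (‖a‖ * ‖b‖) ^ 2 := by
        gcongr
        exact norm_inner_le_norm a b
    _ = ‖a‖ ^ 2 * ‖b‖ ^ 2 := by ring

/-- Cauchy–Schwarz-type bound: for PSD `ρ`, `P` and Hermitian `L`,
`|Tr(ρ P L)|² ≤ Re(Tr(ρ P)) · Re(Tr(ρ L P L))`. -/
theorem abs_trace_sq_le
    {n : ℕ} (ρ P L : Matrix (Fin n) (Fin n) ℂ)
    (hρ : ρ.PosSemidef) (hP : P.PosSemidef) (hL : L.IsHermitian) :
    ‖Matrix.trace (ρ * P * L)‖ ^ 2 ≤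
      (Matrix.trace (ρ * P)).re * (Matrix.trace (ρ * L * P * L)).re := by
  set sρ := CFC.sqrt ρ with hsρ
  set sP := CFC.sqrt P with hsP
  have hsρH : sρᴴ = sρ := (CFC.sqrt_nonneg ρ).isSelfAdjoint
  have hsPH : sPᴴ = sP := (CFC.sqrt_nonneg P).isSelfAdjoint
  have hsρ2 : sρ * sρ = ρ := CFC.sqrt_mul_sqrt_self ρ hρ.nonneg
  have hsP2 : sP * sP = P := CFC.sqrt_mul_sqrt_self P hP.nonneg
  set A := sP * sρ with hA
  set B := sP * L * sρ with hB
  have h1 : (Aᴴ * B).trace = (ρ * P * L).trace := by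
    rw [hA, hB, conjTranspose_mul, hsρH, hsPH]
    rw [show sρ * sP * (sP * L * sρ) = sρ * (P * L * sρ) by
      rw [← hsP2]; noncomm_ring]
    rw [Matrix.trace_mul_comm, show P * L * sρ * sρ = P * L * ρ by
      rw [← hsρ2]; noncomm_ring, Matrix.trace_mul_comm]
    congr 1; noncomm_ring
  have h2 : (Aᴴ * A).trace = (ρ * P).trace := by
    rw [hA, conjTranspose_mul, hsρH, hsPH]
    rw [show sρ * sP * (sP * sρ) = sρ * (P * sρ) by rw [← hsP2]; noncomm_ring]
    rw [Matrix.trace_mul_comm, show P * sρ * sρ = P * ρ by rw [← hsρ2]; noncomm_ring,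
      Matrix.trace_mul_comm]
  have h3 : (Bᴴ * B).trace = (ρ * L * P * L).trace := by
    rw [hB, conjTranspose_mul, conjTranspose_mul, hsρH, hsPH, hL.eq]
    rw [show sρ * (L * sP) * (sP * L * sρ) = sρ * (L * P * L * sρ) by
      rw [← hsP2]; noncomm_ring]
    rw [Matrix.trace_mul_comm, show L * P * L * sρ * sρ = L * P * L * ρ by
      rw [← hsρ2]; noncomm_ring, Matrix.trace_mul_comm]
    congr 1; noncomm_ring
  rw [← h1, ← h2, ← h3]
  exact trace_cs A B
end

section
/- Let ρ and Π be positive semidefinite n×n complex matrices with Re(Tr(ρΠ)) > 0, and let L₁, …, L_p be Hermitian n×n complex matrices. Then for every real vector u ∈ ℝᵖ, (Re Tr(ρΠ(Σᵢ uᵢLᵢ)))² ≤ Re(Tr(ρΠ)) · Σᵢⱼ uᵢuⱼ Re(Tr(ρLᵢΠLⱼ)). -/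
open Matrix
open scoped ComplexOrder

lemma trace_cs_s4 {n : ℕ} (A B : Matrix (Fin n) (Fin n) ℂ) :
    (Matrix.trace (Aᴴ * B)).re ^ 2 ≤
      (Matrix.trace (Aᴴ * A)).re * (Matrix.trace (Bᴴ * B)).re := by
  let v : EuclideanSpace ℂ (Fin n × Fin n) := WithLp.toLp 2 fun x : Fin n × Fin n => A x.1 x.2
  let w : EuclideanSpace ℂ (Fin n × Fin n) := WithLp.toLp 2 fun x : Fin n × Fin n => B x.1 x.2
  have hinner : ∀ (M N : Matrix (Fin n) (Fin n) ℂ),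
      (inner (𝕜 := ℂ) (show EuclideanSpace ℂ (Fin n × Fin n) from WithLp.toLp 2 fun x : Fin n × Fin n => M x.1 x.2)
        (show EuclideanSpace ℂ (Fin n × Fin n) from WithLp.toLp 2 fun x : Fin n × Fin n => N x.1 x.2)) = Matrix.trace (Mᴴ * N) := by
    intro M N
    simp only [PiLp.inner_apply, PiLp.toLp_apply, RCLike.inner_apply, Matrix.trace, Matrix.diag,
      Matrix.mul_apply, Matrix.conjTranspose_apply, Fintype.sum_prod_type]
    rw [Finset.sum_comm]
    simp [mul_comm]
  have h1 : ‖inner (𝕜 := ℂ) v w‖ ≤ ‖v‖ * ‖w‖ := norm_inner_le_norm v w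
  have h2 : (Matrix.trace (Aᴴ * B)).re ^ 2 ≤ ‖inner (𝕜 := ℂ) v w‖ ^ 2 := by
    rw [hinner A B]
    have := Complex.abs_re_le_norm (Matrix.trace (Aᴴ * B))
    calc (Matrix.trace (Aᴴ * B)).re ^ 2 ≤ |(Matrix.trace (Aᴴ * B)).re| ^ 2 := by
          rw [sq_abs]
      _ ≤ ‖Matrix.trace (Aᴴ * B)‖ ^ 2 := by
          exact pow_le_pow_left₀ (abs_nonneg _) this 2
  calc (Matrix.trace (Aᴴ * B)).re ^ 2 ≤ ‖inner (𝕜 := ℂ) v w‖ ^ 2 := h2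
    _ ≤ (‖v‖ * ‖w‖) ^ 2 := pow_le_pow_left₀ (norm_nonneg _) h1 2
    _ = ‖v‖ ^ 2 * ‖w‖ ^ 2 := by ring
    _ = (Matrix.trace (Aᴴ * A)).re * (Matrix.trace (Bᴴ * B)).re := by
        rw [← inner_self_eq_norm_sq (𝕜 := ℂ) v, ← inner_self_eq_norm_sq (𝕜 := ℂ) w,
          hinner A A, hinner B B]
        rfl

open scoped MatrixOrder in
lemma psd_sqrt_exists {n : ℕ} (P : Matrix (Fin n) (Fin n) ℂ) (hP : P.PosSemidef) :
    ∃ S : Matrix (Fin n) (Fin n) ℂ, Sᴴ = S ∧ S * S = P :=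
  ⟨CFC.sqrt P, (CFC.sqrt_nonneg P).isSelfAdjoint, CFC.sqrt_mul_sqrt_self P hP.nonneg⟩

/-- For a regular measurement operator `P`, the classical Fisher quadratic form
is bounded by the quantum Fisher quadratic form:
`(Re Tr(ρ P Σᵢ uᵢ Lᵢ))² ≤ Re(Tr(ρ P)) · Σᵢⱼ uᵢ uⱼ Re(Tr(ρ Lᵢ P Lⱼ))`. -/
theorem classical_fisher_le_quantum_fisher
    {n p : ℕ} (ρ P : Matrix (Fin n) (Fin n) ℂ)
    (L : Fin p → Matrix (Fin n) (Fin n) ℂ)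
    (hρ : ρ.PosSemidef) (hP : P.PosSemidef)
    (hpos : 0 < (Matrix.trace (ρ * P)).re)
    (hL : ∀ i, (L i).IsHermitian) (u : Fin p → ℝ) :
    (Matrix.trace (ρ * P * ∑ i, (u i : ℂ) • L i)).re ^ 2 ≤
      (Matrix.trace (ρ * P)).re *
        ∑ i, ∑ j, u i * u j * (Matrix.trace (ρ * L i * P * L j)).re := by
  set K : Matrix (Fin n) (Fin n) ℂ := ∑ i, (u i : ℂ) • L i with hKdef
  have hK : Kᴴ = K := by
    rw [hKdef, Matrix.conjTranspose_sum]
    refine Finset.sum_congr rfl fun i _ => ?_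
    rw [Matrix.conjTranspose_smul, (hL i).eq]
    simp
  obtain ⟨S, hS, hSS⟩ := psd_sqrt_exists P hP
  obtain ⟨R, hR, hRR⟩ := psd_sqrt_exists ρ hρ
  have key := trace_cs_s4 (S * R) (S * (K * R))
  have e1 : Matrix.trace ((S * R)ᴴ * (S * (K * R))) = Matrix.trace (ρ * P * K) := by
    rw [Matrix.conjTranspose_mul, hS, hR]
    have h : R * S * (S * (K * R)) = R * (S * S * K) * R := by noncomm_ring
    rw [h, Matrix.trace_mul_cycle, hRR, hSS, ← Matrix.mul_assoc]
  have e2 : Matrix.trace ((S * R)ᴴ * (S * R)) = Matrix.trace (ρ * P) := by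
    rw [Matrix.conjTranspose_mul, hS, hR]
    have h : R * S * (S * R) = R * (S * S) * R := by noncomm_ring
    rw [h, Matrix.trace_mul_cycle, hRR, hSS]
  have e3 : Matrix.trace ((S * (K * R))ᴴ * (S * (K * R))) = Matrix.trace (ρ * K * P * K) := by
    rw [Matrix.conjTranspose_mul, Matrix.conjTranspose_mul, hS, hR, hK]
    have h : R * K * S * S * K * R = R * (K * (S * S) * K) * R := by noncomm_ring
    rw [← Matrix.mul_assoc, ← Matrix.mul_assoc, h, Matrix.trace_mul_cycle, hRR, hSS,
      ← Matrix.mul_assoc, ← Matrix.mul_assoc]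
  have e4 : (Matrix.trace (ρ * K * P * K)).re =
      ∑ i, ∑ j, u i * u j * (Matrix.trace (ρ * L i * P * L j)).re := by
    have expand : ρ * K * P * K = ∑ i, ∑ j, ((u i : ℂ) * u j) •
        (ρ * L i * P * L j) := by
      rw [hKdef]
      simp only [Finset.mul_sum, Finset.sum_mul, Matrix.mul_smul, Matrix.smul_mul,
        smul_smul]
      rw [Finset.sum_comm]
      refine Finset.sum_congr rfl fun i _ => Finset.sum_congr rfl fun j _ => ?_
      rw [mul_comm ((u j : ℂ)) ((u i : ℂ))]
    rw [expand, Matrix.trace_sum, Complex.re_sum]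
    refine Finset.sum_congr rfl fun i _ => ?_
    rw [Matrix.trace_sum, Complex.re_sum]
    refine Finset.sum_congr rfl fun j _ => ?_
    rw [Matrix.trace_smul, smul_eq_mul, mul_assoc, Complex.re_ofReal_mul,
      Complex.re_ofReal_mul]
    ring
  rw [e1, e2, e3, e4] at key
  exact key
end

section
/- Let ρ be a positive semidefinite n×n complex matrix, let Π₁, …, Π_m be positive semidefinite n×n complex matrices with Σₖ Πₖ = 1 (the identity matrix) and Re(Tr(ρΠₖ)) > 0 for each k, and let L₁, …, L_p be Hermitian n×n complex matrices. Then for every real vector u ∈ ℝᵖ, Σₖ (Re Tr(ρΠₖ(Σᵢ uᵢLᵢ)))² / Re(Tr(ρΠₖ)) ≤ Σᵢⱼ uᵢuⱼ Re(Tr(ρLᵢLⱼ)). -/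
open Matrix
open scoped ComplexOrder

lemma aux_trace_re_nonneg {n : ℕ} {A : Matrix (Fin n) (Fin n) ℂ}
    (hA : A.PosSemidef) : 0 ≤ (Matrix.trace A).re := by
  have h : ∀ i, 0 ≤ A i i := fun i => by
    exact hA.diag_nonneg
  rw [Matrix.trace]
  simp only [Complex.re_sum]
  exact Finset.sum_nonneg fun i _ => (Complex.le_def.mp (h i)).1

open scoped MatrixOrder in
lemma aux_trace_mul_re_nonneg {n : ℕ} {A B : Matrix (Fin n) (Fin n) ℂ}
    (hA : A.PosSemidef) (hB : B.PosSemidef) :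
    0 ≤ (Matrix.trace (A * B)).re := by
  have h1 : A * B = A * CFC.sqrt B * CFC.sqrt B := by
    rw [Matrix.mul_assoc, CFC.sqrt_mul_sqrt_self B (Matrix.nonneg_iff_posSemidef.mpr hB)]
  have h2 : Matrix.trace (A * CFC.sqrt B * CFC.sqrt B)
      = Matrix.trace (CFC.sqrt B * A * CFC.sqrt B) := by
    rw [trace_mul_cycle]
  have h3 : (CFC.sqrt B * A * CFC.sqrt B).PosSemidef := by
    have := hA.mul_mul_conjTranspose_same (CFC.sqrt B)
    rwa [(Matrix.nonneg_iff_posSemidef.mp (CFC.sqrt_nonneg B)).1.eq] at this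
  rw [h1, h2]
  exact aux_trace_re_nonneg h3

lemma aux_herm_T {n p : ℕ} (L : Fin p → Matrix (Fin n) (Fin n) ℂ)
    (hL : ∀ i, (L i).IsHermitian) (u : Fin p → ℝ) :
    (∑ i, (u i : ℂ) • L i).IsHermitian := by
  show _ = _
  rw [conjTranspose_sum]
  refine Finset.sum_congr rfl fun i _ => ?_
  rw [conjTranspose_smul, Complex.star_def, Complex.conj_ofReal, (hL i).eq]

lemma aux_re_cycle {n : ℕ} (ρ Q T : Matrix (Fin n) (Fin n) ℂ)
    (hρ : ρ.IsHermitian) (hQ : Q.IsHermitian) (hT : T.IsHermitian) :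
    (Matrix.trace (ρ * T * Q)).re = (Matrix.trace (ρ * Q * T)).re := by
  have h : star (Matrix.trace (ρ * T * Q)) = Matrix.trace (ρ * Q * T) := by
    rw [← trace_conjTranspose, conjTranspose_mul, conjTranspose_mul,
      hρ.eq, hQ.eq, hT.eq, trace_mul_comm]
    exact (trace_mul_cycle ρ Q T).symm
  have h2 := congrArg Complex.re h
  rwa [Complex.star_def, Complex.conj_re] at h2

lemma aux_key {n : ℕ} (ρ Q T : Matrix (Fin n) (Fin n) ℂ)
    (hρ : ρ.PosSemidef) (hQ : Q.PosSemidef) (hT : T.IsHermitian)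
    (ha : 0 < (Matrix.trace (ρ * Q)).re) :
    (Matrix.trace (ρ * Q * T)).re ^ 2 / (Matrix.trace (ρ * Q)).re
      ≤ (Matrix.trace (T * ρ * T * Q)).re := by
  set a : ℝ := (Matrix.trace (ρ * Q)).re with hadef
  set b : ℝ := (Matrix.trace (ρ * Q * T)).re with hbdef
  set c : ℝ := (Matrix.trace (T * ρ * T * Q)).re with hcdef
  have hquad : ∀ t : ℝ, 0 ≤ c * (t * t) + (2 * b) * t + a := by
    intro t
    set S : Matrix (Fin n) (Fin n) ℂ := 1 + (t : ℂ) • T with hSdef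
    have hSH : Sᴴ = S := by
      rw [hSdef, conjTranspose_add, conjTranspose_one, conjTranspose_smul,
        Complex.star_def, Complex.conj_ofReal, hT.eq]
    have hSpsd : (S * ρ * S).PosSemidef := by
      have := hρ.mul_mul_conjTranspose_same S
      rwa [hSH] at this
    have hnn : 0 ≤ (Matrix.trace (S * ρ * S * Q)).re :=
      aux_trace_mul_re_nonneg hSpsd hQ
    have hexp : S * ρ * S * Q
        = ρ * Q + (t : ℂ) • (ρ * T * Q) + (t : ℂ) • (T * ρ * Q)
          + ((t : ℂ) ^ 2) • (T * ρ * T * Q) := by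
      rw [hSdef]
      simp only [Matrix.add_mul, Matrix.mul_add, Matrix.one_mul, Matrix.mul_one,
        Matrix.smul_mul, Matrix.mul_smul, smul_smul, smul_add, ← sq]
      abel
    have e1 : (Matrix.trace (ρ * T * Q)).re = b := aux_re_cycle ρ Q T hρ.1 hQ.1 hT
    have e2 : (Matrix.trace (T * ρ * Q)).re = b := by
      rw [hbdef, trace_mul_cycle ρ Q T]
    have hre : (Matrix.trace (S * ρ * S * Q)).re = c * (t * t) + (2 * b) * t + a := by
      rw [hexp]
      simp only [trace_add, trace_smul, Complex.add_re, smul_eq_mul,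
        ← Complex.ofReal_pow, Complex.mul_re, Complex.ofReal_re, Complex.ofReal_im]
      rw [e1, e2]
      ring
    rw [hre] at hnn
    exact hnn
  have hdisc := discrim_le_zero (a := c) (b := 2 * b) (c := a) hquad
  rw [discrim] at hdisc
  rw [div_le_iff₀ ha]
  nlinarith [hdisc]

/-- Helstrom Cramér–Rao bound: for a POVM `{Pₖ}` (PSD matrices summing to the
identity) with all outcome probabilities positive, the classical Fisher
quadratic form is bounded by the quantum Fisher quadratic form. -/
theorem helstrom_cramer_rao_bound
    {n m p : ℕ} (ρ : Matrix (Fin n) (Fin n) ℂ)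
    (P : Fin m → Matrix (Fin n) (Fin n) ℂ)
    (L : Fin p → Matrix (Fin n) (Fin n) ℂ)
    (hρ : ρ.PosSemidef) (hP : ∀ k, (P k).PosSemidef)
    (hsum : ∑ k, P k = 1)
    (hpos : ∀ k, 0 < (Matrix.trace (ρ * P k)).re)
    (hL : ∀ i, (L i).IsHermitian) (u : Fin p → ℝ) :
    ∑ k, (Matrix.trace (ρ * P k * ∑ i, (u i : ℂ) • L i)).re ^ 2 /
        (Matrix.trace (ρ * P k)).re ≤
      ∑ i, ∑ j, u i * u j * (Matrix.trace (ρ * L i * L j)).re := by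
  set T : Matrix (Fin n) (Fin n) ℂ := ∑ i, (u i : ℂ) • L i with hTdef
  have hT : T.IsHermitian := aux_herm_T L hL u
  have step1 : ∑ k, (Matrix.trace (ρ * P k * T)).re ^ 2 /
      (Matrix.trace (ρ * P k)).re ≤ ∑ k, (Matrix.trace (T * ρ * T * P k)).re :=
    Finset.sum_le_sum fun k _ => aux_key ρ (P k) T hρ (hP k) hT (hpos k)
  have step2 : ∑ k, (Matrix.trace (T * ρ * T * P k)).re
      = (Matrix.trace (ρ * (T * T))).re := by
    have : ∑ k, (Matrix.trace (T * ρ * T * P k)) = Matrix.trace (ρ * (T * T)) := by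
      rw [← trace_sum, ← Matrix.mul_sum, hsum, Matrix.mul_one,
        trace_mul_cycle T ρ T, trace_mul_comm]
    calc ∑ k, (Matrix.trace (T * ρ * T * P k)).re
        = (∑ k, Matrix.trace (T * ρ * T * P k)).re := by
          rw [Complex.re_sum]
      _ = (Matrix.trace (ρ * (T * T))).re := by rw [this]
  have step3 : (Matrix.trace (ρ * (T * T))).re
      = ∑ i, ∑ j, u i * u j * (Matrix.trace (ρ * L i * L j)).re := by
    rw [hTdef]
    rw [Finset.sum_mul_sum]
    simp only [Matrix.mul_sum, smul_mul_smul_comm, trace_sum, trace_smul,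
      ← Matrix.mul_assoc]
    rw [Complex.re_sum]
    refine Finset.sum_congr rfl fun i _ => ?_
    rw [Complex.re_sum]
    refine Finset.sum_congr rfl fun j _ => ?_
    rw [Matrix.mul_smul, trace_smul, smul_eq_mul, ← Complex.ofReal_mul,
      Complex.mul_re, Complex.ofReal_re, Complex.ofReal_im, ← Matrix.mul_assoc]
    ring
  calc ∑ k, (Matrix.trace (ρ * P k * T)).re ^ 2 / (Matrix.trace (ρ * P k)).re
      ≤ ∑ k, (Matrix.trace (T * ρ * T * P k)).re := step1
    _ = (Matrix.trace (ρ * (T * T))).re := step2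
    _ = ∑ i, ∑ j, u i * u j * (Matrix.trace (ρ * L i * L j)).re := step3
end

section
/- Let ρ and Π be positive semidefinite n×n complex matrices with Re(Tr(ρΠ)) > 0, and let L₁, …, L_p be Hermitian n×n complex matrices. Define the real p×p matrices F and I by F_{ij} = Re(Tr(ρΠLᵢ))·Re(Tr(ρΠLⱼ))/Re(Tr(ρΠ)) and I_{ij} = Re(Tr(ρLᵢΠLⱼ)). Then F = I if and only if there exist real numbers ξ₁, …, ξ_p such that Π Lᵢ ρ = ξᵢ Π ρ for every i. -/
open Matrix
open scoped ComplexOrder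

lemma aux_trace_zero {k : ℕ} {A : Matrix (Fin k) (Fin k) ℂ}
    (h : Matrix.trace (Aᴴ * A) = 0) : A = 0 := by
  have h' : ∑ j, ∑ i, Complex.normSq (A i j) = 0 := by
    have h2 := congrArg Complex.re h
    have h3 : Matrix.trace (Aᴴ * A) = ∑ j, ∑ i, (Complex.normSq (A i j) : ℂ) := by
      simp only [Matrix.trace, Matrix.diag, Matrix.mul_apply, Matrix.conjTranspose_apply,
        Complex.normSq_eq_conj_mul_self]
      rfl
    rw [h3] at h2
    simpa using h2
  ext i j
  have h4 := (Finset.sum_eq_zero_iff_of_nonneg (fun j _ => Finset.sum_nonneg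
    (fun i _ => Complex.normSq_nonneg (A i j)))).mp h' j (Finset.mem_univ j)
  have h5 := (Finset.sum_eq_zero_iff_of_nonneg
    (fun i _ => Complex.normSq_nonneg (A i j))).mp h4 i (Finset.mem_univ i)
  simpa using Complex.normSq_eq_zero.mp h5

/-- Saturation condition for a regular POVM operator: the classical Fisher
information contribution `F` equals the quantum one `I` if and only if
`P Lᵢ ρ = ξᵢ P ρ` for some real numbers `ξᵢ`. -/
theorem regular_saturation_iff
    {n p : ℕ} (ρ P : Matrix (Fin n) (Fin n) ℂ)
    (L : Fin p → Matrix (Fin n) (Fin n) ℂ)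
    (hρ : ρ.PosSemidef) (hP : P.PosSemidef)
    (hpos : 0 < (Matrix.trace (ρ * P)).re)
    (hL : ∀ i, (L i).IsHermitian) :
    (Matrix.of fun i j : Fin p =>
        (Matrix.trace (ρ * P * L i)).re * (Matrix.trace (ρ * P * L j)).re /
          (Matrix.trace (ρ * P)).re) =
      (Matrix.of fun i j : Fin p => (Matrix.trace (ρ * L i * P * L j)).re) ↔
    ∃ ξ : Fin p → ℝ, ∀ i, P * L i * ρ = (ξ i : ℂ) • (P * ρ) := by
  set t := (Matrix.trace (ρ * P)).re with ht
  have htne : t ≠ 0 := ne_of_gt hpos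
  constructor
  · intro h
    set Q := (open scoped MatrixOrder in CFC.sqrt P) with hQ
    set R := (open scoped MatrixOrder in CFC.sqrt ρ) with hR
    have hQh : Qᴴ = Q := by
      open scoped MatrixOrder in exact (CFC.sqrt_nonneg P).posSemidef.isHermitian
    have hRh : Rᴴ = R := by
      open scoped MatrixOrder in exact (CFC.sqrt_nonneg ρ).posSemidef.isHermitian
    have hQQ : Q * Q = P := by
      open scoped MatrixOrder in exact CFC.sqrt_mul_sqrt_self P hP.nonneg
    have hRR : R * R = ρ := by
      open scoped MatrixOrder in exact CFC.sqrt_mul_sqrt_self ρ hρ.nonneg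
    refine ⟨fun i => (Matrix.trace (ρ * P * L i)).re / t, fun i => ?_⟩
    set ξ : ℝ := (Matrix.trace (ρ * P * L i)).re / t with hξ
    set N : Matrix (Fin n) (Fin n) ℂ := L i - (ξ : ℂ) • 1 with hN
    have hNH : Nᴴ = N := by
      simp [hN, Matrix.conjTranspose_sub, Matrix.conjTranspose_smul, (hL i).eq,
        Complex.conj_ofReal]
    set M : Matrix (Fin n) (Fin n) ℂ := Q * N * R with hM
    -- trace of Mᴴ M equals trace (ρ * (N * (P * N)))
    have hMH : Mᴴ = R * N * Q := by
      simp [hM, Matrix.conjTranspose_mul, hQh, hRh, hNH, mul_assoc]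
    have key : Matrix.trace (Mᴴ * M) = Matrix.trace (ρ * (N * (P * N))) := by
      rw [hMH, hM]
      have e1 : R * N * Q * (Q * N * R) = R * (N * (P * (N * R))) := by
        simp only [mul_assoc]
        rw [← mul_assoc Q Q, hQQ]
      rw [e1]
      calc Matrix.trace (R * (N * (P * (N * R))))
          = Matrix.trace ((N * (P * (N * R))) * R) := Matrix.trace_mul_comm _ _
        _ = Matrix.trace (N * (P * (N * ρ))) := by
            rw [show (N * (P * (N * R))) * R = N * (P * (N * (R * R))) by
              simp only [mul_assoc], hRR]
        _ = Matrix.trace ((N * (P * N)) * ρ) := by congr 1; simp only [mul_assoc]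
        _ = Matrix.trace (ρ * (N * (P * N))) := (Matrix.trace_mul_comm ρ _).symm
    set a := Matrix.trace (ρ * P * L i) with ha
    set b := Matrix.trace (ρ * L i * P) with hb
    set c := Matrix.trace (ρ * L i * P * L i) with hc
    set s := Matrix.trace (ρ * P) with hs
    have expand : Matrix.trace (ρ * (N * (P * N))) =
        c - (ξ : ℂ) * b - (ξ : ℂ) * a + (ξ : ℂ) ^ 2 * s := by
      have : ρ * (N * (P * N)) = ρ * L i * P * L i - (ξ : ℂ) • (ρ * L i * P)
          - (ξ : ℂ) • (ρ * P * L i) + ((ξ : ℂ) * (ξ : ℂ)) • (ρ * P) := by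
        simp only [hN, Matrix.sub_mul, Matrix.mul_sub, Matrix.smul_mul, Matrix.mul_smul,
          Matrix.one_mul, Matrix.mul_one, smul_smul, smul_add, smul_sub, mul_assoc]
        abel
      rw [this]
      simp only [Matrix.trace_add, Matrix.trace_sub, Matrix.trace_smul, smul_eq_mul]
      ring
    -- b = star a
    have hba : b = starRingEnd ℂ a := by
      rw [ha, hb]
      have : (ρ * P * L i)ᴴ = L i * P * ρ := by
        simp [Matrix.conjTranspose_mul, hρ.isHermitian.eq, hP.isHermitian.eq, (hL i).eq,
          mul_assoc]
      calc Matrix.trace (ρ * L i * P) = Matrix.trace (L i * P * ρ) :=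
            (Matrix.trace_mul_cycle (L i) P ρ).symm
        _ = Matrix.trace ((ρ * P * L i)ᴴ) := by rw [this]
        _ = starRingEnd ℂ (Matrix.trace (ρ * P * L i)) := by
            rw [Matrix.trace_conjTranspose]; rfl
    -- s is "hermitian": trace(MᴴM) is fixed by star
    have hself : starRingEnd ℂ (Matrix.trace (Mᴴ * M)) = Matrix.trace (Mᴴ * M) := by
      conv_rhs => rw [show Mᴴ * M = (Mᴴ * M)ᴴ by simp [Matrix.conjTranspose_mul]]
      rw [Matrix.trace_conjTranspose]; rfl
    -- hypothesis at (i,i)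
    have hii : a.re * a.re / t = c.re := congrFun (congrFun h i) i
    have hre : (Matrix.trace (Mᴴ * M)).re = 0 := by
      rw [key, expand]
      have hbre : b.re = a.re := by rw [hba]; exact Complex.conj_re a
      have hsre : s.re = t := rfl
      rw [← Complex.ofReal_pow]
      simp only [Complex.add_re, Complex.sub_re, Complex.re_ofReal_mul, hbre, hsre]
      rw [hξ, ← hii]
      field_simp
      ring
    have him : (Matrix.trace (Mᴴ * M)).im = 0 := by
      have := congrArg Complex.im hself
      simp only [Complex.conj_im] at this
      linarith
    have hMz : M = 0 := aux_trace_zero (Complex.ext hre him)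
    have hQNR : Q * (N * R) = 0 := by rw [← mul_assoc]; exact hMz
    have hPNρ : P * N * ρ = 0 := by
      calc P * N * ρ = Q * (Q * (N * R) * R) := by
            rw [← hQQ, ← hRR]; simp only [mul_assoc]
        _ = 0 := by rw [hQNR]; simp
    have : P * L i * ρ - (ξ : ℂ) • (P * ρ) = 0 := by
      rw [← hPNρ, hN]
      simp only [Matrix.mul_sub, Matrix.sub_mul, Matrix.mul_smul, Matrix.smul_mul,
        Matrix.mul_one]
    rw [sub_eq_zero] at this
    exact this
  · rintro ⟨ξ, hξ⟩
    ext i j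
    simp only [Matrix.of_apply]
    have h1 : ∀ k, Matrix.trace (ρ * P * L k) = (ξ k : ℂ) * Matrix.trace (ρ * P) := by
      intro k
      calc Matrix.trace (ρ * P * L k) = Matrix.trace (P * L k * ρ) :=
            (Matrix.trace_mul_cycle P (L k) ρ).symm
        _ = (ξ k : ℂ) * Matrix.trace (ρ * P) := by
            rw [hξ k, Matrix.trace_smul, smul_eq_mul, Matrix.trace_mul_comm]
    have h2 : ρ * L i * P = (ξ i : ℂ) • (ρ * P) := by
      calc ρ * L i * P = (P * L i * ρ)ᴴ := by
            simp [Matrix.conjTranspose_mul, hρ.isHermitian.eq, hP.isHermitian.eq, (hL i).eq,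
              mul_assoc]
        _ = (ξ i : ℂ) • (ρ * P) := by
            rw [hξ i]
            simp [Matrix.conjTranspose_smul, Matrix.conjTranspose_mul, hρ.isHermitian.eq,
              hP.isHermitian.eq, Complex.conj_ofReal]
    have h3 : Matrix.trace (ρ * L i * P * L j) =
        (ξ i : ℂ) * ((ξ j : ℂ) * Matrix.trace (ρ * P)) := by
      rw [h2, Matrix.smul_mul, Matrix.trace_smul, smul_eq_mul, h1 j]
    rw [h1 i, h1 j, h3]
    simp only [Complex.mul_re, Complex.ofReal_re, Complex.ofReal_im, zero_mul, sub_zero]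
    rw [← ht]
    field_simp
end

section
/- Let ρ : ℝ → (n×n complex matrices) be twice differentiable at t₀ with ρ(t) positive semidefinite for all t, and let L : ℝ → (n×n complex matrices) be differentiable at t₀ with L(t) Hermitian and L(t)ρ(t) + ρ(t)L(t) = 2ρ'(t) for all t in a neighborhood of t₀. Let Π be a positive semidefinite matrix with Π·ρ(t₀) = 0. Then Re(Tr(ρ(t₀)L(t₀)ΠL(t₀))) = 2·Re(Tr(ρ''(t₀)Π)). -/
open Matrix Filter
open scoped ComplexOrder Topology

attribute [local instance] Matrix.frobeniusNormedAddCommGroup Matrix.frobeniusNormedSpace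
attribute [local instance] Matrix.frobeniusNormedRing Matrix.frobeniusNormedAlgebra

/-- For a twice differentiable PSD family `ρ(t)` with SLD family `L(t)`
(differentiable at `t₀`) and a null operator `P` at `t₀` (i.e. `P ρ(t₀) = 0`),
one has `Re Tr(ρ(t₀) L(t₀) P L(t₀)) = 2 Re Tr(ρ''(t₀) P)`. -/
theorem null_operator_quantum_fisher_eq_second_deriv
    {n : ℕ} (ρ ρ' ρ'' : ℝ → Matrix (Fin n) (Fin n) ℂ)
    (L L' : ℝ → Matrix (Fin n) (Fin n) ℂ)
    (P : Matrix (Fin n) (Fin n) ℂ) (t₀ : ℝ)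
    (hρderiv : ∀ᶠ t in 𝓝 t₀, HasDerivAt ρ (ρ' t) t)
    (hρderiv2 : HasDerivAt ρ' (ρ'' t₀) t₀)
    (hρ : ∀ t, (ρ t).PosSemidef)
    (hLderiv : HasDerivAt L (L' t₀) t₀)
    (hLherm : ∀ᶠ t in 𝓝 t₀, (L t).IsHermitian)
    (hSLD : ∀ᶠ t in 𝓝 t₀, L t * ρ t + ρ t * L t = (2 : ℂ) • ρ' t)
    (hP : P.PosSemidef) (hnull : P * ρ t₀ = 0) :
    (Matrix.trace (ρ t₀ * L t₀ * P * L t₀)).re =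
      2 * (Matrix.trace (ρ'' t₀ * P)).re := by
  have hρP : ρ t₀ * P = 0 := by
    have := congrArg Matrix.conjTranspose hnull
    simpa [Matrix.conjTranspose_mul, (hρ t₀).1.eq, hP.1.eq] using this
  have hρ0 : HasDerivAt ρ (ρ' t₀) t₀ := hρderiv.self_of_nhds
  have hf : HasDerivAt (fun t => L t * ρ t + ρ t * L t)
      (L' t₀ * ρ t₀ + L t₀ * ρ' t₀ + (ρ' t₀ * L t₀ + ρ t₀ * L' t₀)) t₀ :=
    (hLderiv.mul hρ0).add (hρ0.mul hLderiv)
  have hg : HasDerivAt (fun t => (2:ℂ) • ρ' t) ((2:ℂ) • ρ'' t₀) t₀ :=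
    hρderiv2.const_smul (2:ℂ)
  have hf' : HasDerivAt (fun t => L t * ρ t + ρ t * L t) ((2:ℂ) • ρ'' t₀) t₀ :=
    hg.congr_of_eventuallyEq hSLD
  have hE : L' t₀ * ρ t₀ + L t₀ * ρ' t₀ + (ρ' t₀ * L t₀ + ρ t₀ * L' t₀)
      = (2:ℂ) • ρ'' t₀ := hf.unique hf'
  have hsld0 : L t₀ * ρ t₀ + ρ t₀ * L t₀ = (2:ℂ) • ρ' t₀ := hSLD.self_of_nhds
  -- trace pieces
  have h1 : Matrix.trace (L' t₀ * ρ t₀ * P) = 0 := by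
    rw [mul_assoc, hρP, mul_zero, Matrix.trace_zero]
  have h2 : Matrix.trace (ρ t₀ * L' t₀ * P) = 0 := by
    rw [Matrix.trace_mul_cycle, hnull, Matrix.zero_mul, Matrix.trace_zero]
  have h3 : (2:ℂ) * Matrix.trace (L t₀ * ρ' t₀ * P)
      = Matrix.trace (ρ t₀ * L t₀ * P * L t₀) := by
    have e : L t₀ * ((2:ℂ) • ρ' t₀) * P = (2:ℂ) • (L t₀ * ρ' t₀ * P) := by
      simp [mul_smul_comm, Matrix.smul_mul]
    rw [← hsld0] at e
    have := congrArg Matrix.trace e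
    simp only [mul_add, add_mul, Matrix.trace_add, Matrix.trace_smul, smul_eq_mul,
      mul_assoc, hρP, mul_zero, Matrix.trace_zero, zero_add] at this
    simp only [mul_assoc]
    rw [← this, Matrix.trace_mul_comm (L t₀) (ρ t₀ * (L t₀ * P))]
    simp [mul_assoc]
  have h4 : (2:ℂ) * Matrix.trace (ρ' t₀ * L t₀ * P)
      = Matrix.trace (ρ t₀ * L t₀ * P * L t₀) := by
    have e : ((2:ℂ) • ρ' t₀) * L t₀ * P = (2:ℂ) • (ρ' t₀ * L t₀ * P) := by
      simp [Matrix.smul_mul]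
    rw [← hsld0] at e
    have := congrArg Matrix.trace e
    have hz : Matrix.trace (ρ t₀ * (L t₀ * (L t₀ * P))) = 0 := by
      rw [Matrix.trace_mul_comm (ρ t₀) (L t₀ * (L t₀ * P))]
      simp [mul_assoc, hnull]
    simp only [mul_add, add_mul, Matrix.trace_add, Matrix.trace_smul, smul_eq_mul,
      mul_assoc, hz, add_zero] at this
    simp only [mul_assoc]
    rw [← this, Matrix.trace_mul_comm (L t₀) (ρ t₀ * (L t₀ * P))]
    simp [mul_assoc]
  have key : Matrix.trace (ρ t₀ * L t₀ * P * L t₀) = 2 * Matrix.trace (ρ'' t₀ * P) := by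
    have := congrArg (fun M => Matrix.trace (M * P)) hE
    simp only [add_mul, Matrix.trace_add, Matrix.smul_mul, Matrix.trace_smul,
      smul_eq_mul] at this
    rw [h1, h2] at this
    have := congrArg (fun z => (2:ℂ) * z) this
    push_cast at this ⊢
    linear_combination (this - h3 - h4) / 2
  rw [key]
  simp
end

section
/- Let ρ and Π be positive semidefinite n×n complex matrices with Πρ = 0, and let L₁, …, L_p be Hermitian n×n complex matrices such that Re(Tr(ρLⱼΠLⱼ)) ≠ 0 for every j. Then the following are equivalent: (a) there exist real numbers η_{ij} such that Π Lᵢ ρ = η_{ij} Π Lⱼ ρ for all i, j; (b) for all i, j the number Tr(ρLᵢΠLⱼ) is real and |Tr(ρLᵢΠLⱼ)|² = Re(Tr(ρLᵢΠLᵢ)) · Re(Tr(ρLⱼΠLⱼ)). -/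
open Matrix
open scoped ComplexOrder

lemma my_tr_zero {m : ℕ} (A : Matrix (Fin m) (Fin m) ℂ) (h : Matrix.trace (Aᴴ * A) = 0) : A = 0 := by
  have h1 : ∑ k : Fin m, ∑ l : Fin m, Complex.normSq (A l k) = 0 := by
    have h2 : Matrix.trace (Aᴴ * A) = ((∑ k : Fin m, ∑ l : Fin m, Complex.normSq (A l k) : ℝ) : ℂ) := by
      simp [Matrix.trace, Matrix.mul_apply, Matrix.diag, Matrix.conjTranspose_apply,
        Complex.normSq_eq_conj_mul_self]
    rw [h2] at h
    exact_mod_cast h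
  ext i j
  have := (Finset.sum_eq_zero_iff_of_nonneg (fun k _ => Finset.sum_nonneg fun l _ => Complex.normSq_nonneg _)).mp h1 j (Finset.mem_univ _)
  have := (Finset.sum_eq_zero_iff_of_nonneg (fun l _ => Complex.normSq_nonneg _)).mp this i (Finset.mem_univ _)
  simpa using Complex.normSq_eq_zero.mp this

lemma my_tr_star {m : ℕ} (A B : Matrix (Fin m) (Fin m) ℂ) :
    star (Matrix.trace (Aᴴ * B)) = Matrix.trace (Bᴴ * A) := by
  rw [← Matrix.trace_conjTranspose, Matrix.conjTranspose_mul, Matrix.conjTranspose_conjTranspose]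

/-- Saturation condition for a null POVM operator: the proportionality
condition `P Lᵢ ρ = ηᵢⱼ P Lⱼ ρ` with real `ηᵢⱼ` is equivalent to realness plus
equality in the Cauchy–Schwarz inequality for the traces `Tr(ρ Lᵢ P Lⱼ)`. -/
theorem null_saturation_iff
    {n p : ℕ} (ρ P : Matrix (Fin n) (Fin n) ℂ)
    (L : Fin p → Matrix (Fin n) (Fin n) ℂ)
    (hρ : ρ.PosSemidef) (hP : P.PosSemidef)
    (hnull : P * ρ = 0)
    (hL : ∀ i, (L i).IsHermitian)
    (hne : ∀ j, (Matrix.trace (ρ * L j * P * L j)).re ≠ 0) :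
    (∃ η : Fin p → Fin p → ℝ,
        ∀ i j, P * L i * ρ = (η i j : ℂ) • (P * L j * ρ)) ↔
    (∀ i j, (Matrix.trace (ρ * L i * P * L j)).im = 0 ∧
        ‖Matrix.trace (ρ * L i * P * L j)‖ ^ 2 =
          (Matrix.trace (ρ * L i * P * L i)).re *
            (Matrix.trace (ρ * L j * P * L j)).re) := by
  set s := (open MatrixOrder in CFC.sqrt ρ) with hs
  set q := (open MatrixOrder in CFC.sqrt P) with hq
  have hss : s * s = ρ := by open MatrixOrder in exact CFC.sqrt_mul_sqrt_self ρ hρ.nonneg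
  have hqq : q * q = P := by open MatrixOrder in exact CFC.sqrt_mul_sqrt_self P hP.nonneg
  have hsH : sᴴ = s := by open MatrixOrder in exact (CFC.sqrt_nonneg ρ).posSemidef.1
  have hqH : qᴴ = q := by open MatrixOrder in exact (CFC.sqrt_nonneg P).posSemidef.1
  set X : Fin p → Matrix (Fin n) (Fin n) ℂ := fun k => q * L k * s with hX
  -- general trace identity
  have key : ∀ M N : Matrix (Fin n) (Fin n) ℂ, Mᴴ = M → Nᴴ = N →
      Matrix.trace (ρ * M * P * N) = Matrix.trace ((q * M * s)ᴴ * (q * N * s)) := by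
    intro M N hM hN
    calc Matrix.trace (ρ * M * P * N)
        = Matrix.trace (s * (s * (M * (q * (q * N))))) := by
          rw [← hss, ← hqq]; simp only [Matrix.mul_assoc]
      _ = Matrix.trace ((s * (M * (q * (q * N)))) * s) := Matrix.trace_mul_comm _ _
      _ = Matrix.trace ((q * M * s)ᴴ * (q * N * s)) := by
          rw [Matrix.conjTranspose_mul, Matrix.conjTranspose_mul, hM, hsH, hqH]
          simp only [Matrix.mul_assoc]
  have tr_eq : ∀ i j, Matrix.trace (ρ * L i * P * L j) = Matrix.trace ((X i)ᴴ * X j) :=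
    fun i j => key (L i) (L j) (hL i) (hL j)
  -- self inner products are real
  have self_im : ∀ (A : Matrix (Fin n) (Fin n) ℂ), (Matrix.trace (Aᴴ * A)).im = 0 := by
    intro A
    have := my_tr_star A A
    rw [Complex.star_def] at this
    exact Complex.conj_eq_iff_im.mp this
  have back : ∀ k, q * X k * s = P * L k * ρ := by
    intro k
    rw [hX, ← hss, ← hqq]
    simp only [Matrix.mul_assoc]
  -- proportionality of X from trace zero
  have prop_of : ∀ i j (c : ℝ), P * L i * ρ = (c : ℂ) • (P * L j * ρ) → X i = (c : ℂ) • X j := by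
    intro i j c hc
    set M : Matrix (Fin n) (Fin n) ℂ := L i - (c : ℂ) • L j with hM
    have hMH : Mᴴ = M := by
      rw [hM]
      simp [Matrix.conjTranspose_sub, Matrix.conjTranspose_smul, (hL i).eq, (hL j).eq,
        Complex.star_def, Complex.conj_ofReal]
    have h0 : P * (M * ρ) = 0 := by
      rw [hM]
      have : P * (L i - (c:ℂ) • L j) * ρ = 0 := by
        simp only [Matrix.mul_sub, Matrix.sub_mul, Matrix.mul_smul, Matrix.smul_mul]
        rw [hc]; simp
      rw [← Matrix.mul_assoc]; exact this
    have hz : q * M * s = 0 := by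
      apply my_tr_zero
      rw [← key M M hMH hMH]
      calc Matrix.trace (ρ * M * P * M)
          = Matrix.trace (ρ * (M * (P * M))) := by simp only [Matrix.mul_assoc]
        _ = Matrix.trace ((M * (P * M)) * ρ) := Matrix.trace_mul_comm _ _
        _ = Matrix.trace (M * (P * (M * ρ))) := by simp only [Matrix.mul_assoc]
        _ = 0 := by rw [h0, Matrix.mul_zero, Matrix.trace_zero]
    have : q * M * s = X i - (c:ℂ) • X j := by
      rw [hM, hX]
      simp only [Matrix.mul_sub, Matrix.sub_mul, Matrix.mul_smul, Matrix.smul_mul]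
    rw [this] at hz
    exact sub_eq_zero.mp hz
  constructor
  · rintro ⟨η, hη⟩ i j
    have hXij := prop_of i j (η i j) (hη i j)
    have him : (Matrix.trace ((X j)ᴴ * X j)).im = 0 := self_im _
    have ht : Matrix.trace (ρ * L i * P * L j)
        = (η i j : ℂ) * Matrix.trace ((X j)ᴴ * X j) := by
      rw [tr_eq i j, hXij]
      simp [Matrix.conjTranspose_smul, Matrix.smul_mul, Complex.star_def,
        Complex.conj_ofReal]
    have hti : Matrix.trace (ρ * L i * P * L i)
        = (η i j : ℂ) * (η i j : ℂ) * Matrix.trace ((X j)ᴴ * X j) := by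
      rw [tr_eq i i, hXij]
      simp [Matrix.conjTranspose_smul, Matrix.smul_mul, Matrix.mul_smul, Complex.star_def,
        Complex.conj_ofReal]
      ring
    have htj : Matrix.trace (ρ * L j * P * L j) = Matrix.trace ((X j)ᴴ * X j) := tr_eq j j
    constructor
    · rw [ht]
      simp [Complex.mul_im, him]
    · rw [Complex.sq_norm, Complex.normSq_apply, ht, hti, htj]
      simp [Complex.mul_re, Complex.mul_im, him]
      ring
  · intro hb
    refine ⟨fun i j => (Matrix.trace (ρ * L i * P * L j)).re /
      (Matrix.trace (ρ * L j * P * L j)).re, ?_⟩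
    intro i j
    obtain ⟨him, habs⟩ := hb i j
    have himii : (Matrix.trace (ρ * L i * P * L i)).im = 0 := (hb i i).1
    have himjj : (Matrix.trace (ρ * L j * P * L j)).im = 0 := (hb j j).1
    have htre : (Matrix.trace (ρ * L i * P * L j)).re ^ 2
        = (Matrix.trace (ρ * L i * P * L i)).re * (Matrix.trace (ρ * L j * P * L j)).re := by
      rw [← habs, Complex.sq_norm, Complex.normSq_apply, him]
      ring
    set c : ℝ := (Matrix.trace (ρ * L i * P * L j)).re /
      (Matrix.trace (ρ * L j * P * L j)).re with hc
    have him' : (Matrix.trace ((X i)ᴴ * X j)).im = 0 := by rw [← tr_eq]; exact him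
    have hji : Matrix.trace ((X j)ᴴ * X i) = Matrix.trace (ρ * L i * P * L j) := by
      rw [← my_tr_star (X i) (X j), ← tr_eq i j]
      rw [Complex.star_def]
      exact Complex.conj_eq_iff_im.mpr him
    have expand : Matrix.trace ((X i - (c:ℂ) • X j)ᴴ * (X i - (c:ℂ) • X j))
        = Matrix.trace ((X i)ᴴ * X i) - (c:ℂ) * Matrix.trace ((X i)ᴴ * X j)
          - (c:ℂ) * Matrix.trace ((X j)ᴴ * X i)
          + (c:ℂ) * (c:ℂ) * Matrix.trace ((X j)ᴴ * X j) := by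
      simp [Matrix.conjTranspose_sub, Matrix.conjTranspose_smul, Matrix.sub_mul,
        Matrix.mul_sub, Matrix.smul_mul, Matrix.mul_smul, Matrix.trace_sub,
        Matrix.trace_smul, Complex.star_def, Complex.conj_ofReal, smul_eq_mul]
      ring
    have h0 : Matrix.trace ((X i - (c:ℂ) • X j)ᴴ * (X i - (c:ℂ) • X j)) = 0 := by
      rw [expand, ← tr_eq i i, ← tr_eq i j, ← tr_eq j j, hji]
      apply Complex.ext
      · simp only [Complex.sub_re, Complex.add_re, Complex.mul_re, Complex.mul_im,
          Complex.ofReal_re, Complex.ofReal_im, Complex.zero_re, him, himii, himjj]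
        have hnej := hne j
        have hcd : c * (Matrix.trace (ρ * L j * P * L j)).re = (Matrix.trace (ρ * L i * P * L j)).re := by
          rw [hc]; field_simp
        have hca : (Matrix.trace (ρ * L i * P * L i)).re = c * (Matrix.trace (ρ * L i * P * L j)).re := by
          rw [hc, div_mul_eq_mul_div, eq_div_iff hnej]; nlinarith [htre]
        linear_combination hca + c * hcd
      · simp [Complex.sub_im, Complex.add_im, Complex.mul_im, Complex.mul_re,
          him, himii, himjj]
    have hXc : X i = (c:ℂ) • X j := sub_eq_zero.mp (my_tr_zero _ h0)
    rw [← back i, ← back j, hXc]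
    simp only [Matrix.smul_mul, Matrix.mul_smul]
    rfl
end

section
/- Let ρ be a positive semidefinite n×n complex matrix, let L₁, …, L_p be Hermitian n×n complex matrices, and let Π₁, …, Π_m be positive semidefinite n×n complex matrices with Σₖ Πₖ = 1 (the identity matrix). Suppose that for each k one of the following holds: either (regular case) there exist real numbers ξᵢᵏ with Πₖ Lᵢ ρ = ξᵢᵏ Πₖ ρ for all i, or (null case) Πₖ ρ = 0 and there exist real numbers ηᵢⱼᵏ with Πₖ Lᵢ ρ = ηᵢⱼᵏ Πₖ Lⱼ ρ for all i, j. Then ρ (LᵢLⱼ − LⱼLᵢ) ρ = 0 for all i, j; that is, the commutator [Lᵢ, Lⱼ] vanishes on the support of ρ. -/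
open Matrix
open scoped ComplexOrder

/-- Partial commutativity condition: if a POVM `{Pₖ}` saturates the matrix
Helstrom Cramér–Rao bound (each `Pₖ` satisfying the regular or the null
saturation condition), then the SLDs commute on the support of `ρ`:
`ρ (Lᵢ Lⱼ − Lⱼ Lᵢ) ρ = 0`. -/
theorem partial_commutativity_of_saturation
    {n m p : ℕ} (ρ : Matrix (Fin n) (Fin n) ℂ)
    (P : Fin m → Matrix (Fin n) (Fin n) ℂ)
    (L : Fin p → Matrix (Fin n) (Fin n) ℂ)
    (hρ : ρ.PosSemidef) (hP : ∀ k, (P k).PosSemidef)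
    (hsum : ∑ k, P k = 1)
    (hL : ∀ i, (L i).IsHermitian)
    (hsat : ∀ k,
      (∃ ξ : Fin p → ℝ, ∀ i, P k * L i * ρ = (ξ i : ℂ) • (P k * ρ)) ∨
      (P k * ρ = 0 ∧ ∃ η : Fin p → Fin p → ℝ,
        ∀ i j, P k * L i * ρ = (η i j : ℂ) • (P k * L j * ρ))) :
    ∀ i j, ρ * (L i * L j - L j * L i) * ρ = 0 := by
  intro i j
  have hρH : ρᴴ = ρ := hρ.1
  -- conjugate transpose fact
  have hct : ∀ (k : Fin m) (a : Fin p), (P k * L a * ρ)ᴴ = ρ * L a * P k := by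
    intro k a
    simp [Matrix.conjTranspose_mul, hρH, (hL a).eq, (hP k).1.eq, mul_assoc]
  have key : ∀ k, ρ * L i * P k * L j * ρ = ρ * L j * P k * L i * ρ := by
    intro k
    rcases hsat k with ⟨ξ, hξ⟩ | ⟨h0, η, hη⟩
    · have h1 : ∀ a : Fin p, ρ * L a * P k = (ξ a : ℂ) • (ρ * P k) := by
        intro a
        have := congrArg Matrix.conjTranspose (hξ a)
        simpa [hct, Matrix.conjTranspose_mul, Matrix.conjTranspose_smul,
          hρH, (hP k).1.eq, Complex.conj_ofReal] using this
      have e : ∀ a b : Fin p,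
          ρ * L a * P k * L b * ρ = ((ξ a : ℂ) * ξ b) • (ρ * (P k * ρ)) := by
        intro a b
        calc ρ * L a * P k * L b * ρ = (ρ * L a * P k) * (L b * ρ) := by
              rw [mul_assoc]
          _ = (ξ a : ℂ) • ((ρ * P k) * (L b * ρ)) := by rw [h1 a, smul_mul_assoc]
          _ = (ξ a : ℂ) • (ρ * (P k * L b * ρ)) := by rw [mul_assoc, ← mul_assoc (P k)]
          _ = (ξ a : ℂ) • (ρ * ((ξ b : ℂ) • (P k * ρ))) := by rw [hξ b]
          _ = ((ξ a : ℂ) * ξ b) • (ρ * (P k * ρ)) := by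
              rw [Matrix.mul_smul, smul_smul]
      rw [e i j, e j i, mul_comm ((ξ j : ℂ))]
    · have h1 : ρ * L i * P k = (η i j : ℂ) • (ρ * L j * P k) := by
        have := congrArg Matrix.conjTranspose (hη i j)
        simpa [hct, Matrix.conjTranspose_smul, Complex.conj_ofReal] using this
      calc ρ * L i * P k * L j * ρ = (ρ * L i * P k) * (L j * ρ) := by rw [mul_assoc]
        _ = (η i j : ℂ) • ((ρ * L j * P k) * (L j * ρ)) := by rw [h1, smul_mul_assoc]
        _ = (ρ * L j) * ((η i j : ℂ) • (P k * L j * ρ)) := by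
            rw [Matrix.mul_smul, mul_assoc (ρ * L j), ← mul_assoc (P k)]
        _ = (ρ * L j) * (P k * L i * ρ) := by rw [← hη i j]
        _ = ρ * L j * P k * L i * ρ := by rw [← mul_assoc, ← mul_assoc]
  have expand : ∀ a b : Fin p,
      ρ * L a * L b * ρ = ∑ k, ρ * L a * P k * L b * ρ := by
    intro a b
    calc ρ * L a * L b * ρ = ρ * L a * (∑ k, P k) * L b * ρ := by
          rw [hsum, mul_one]
      _ = ∑ k, ρ * L a * P k * L b * ρ := by
          rw [Finset.mul_sum, Finset.sum_mul, Finset.sum_mul]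
  have goal' : ρ * L i * L j * ρ = ρ * L j * L i * ρ := by
    rw [expand i j, expand j i]
    exact Finset.sum_congr rfl fun k _ => key k
  have : ρ * (L i * L j - L j * L i) * ρ
      = ρ * L i * L j * ρ - ρ * L j * L i * ρ := by
    noncomm_ring
  rw [this, goal', sub_self]
end

section
/- Let ρ and Π be positive semidefinite n×n complex matrices, let Lᵢ and Lⱼ be Hermitian n×n complex matrices, and suppose there exist real numbers ξᵢ and ξⱼ with Π Lᵢ ρ = ξᵢ Π ρ and Π Lⱼ ρ = ξⱼ Π ρ. Then ρ Lᵢ Π Lⱼ ρ = ρ Lⱼ Π Lᵢ ρ. -/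
open Matrix
open scoped ComplexOrder

/-- A regular measurement operator satisfying the saturation condition mediates
commutativity of the SLDs on the support of `ρ`:
`ρ Lᵢ P Lⱼ ρ = ρ Lⱼ P Lᵢ ρ`. -/
theorem regular_operator_mediates_commutativity
    {n : ℕ} (ρ P Li Lj : Matrix (Fin n) (Fin n) ℂ)
    (hρ : ρ.PosSemidef) (hP : P.PosSemidef)
    (hLi : Li.IsHermitian) (hLj : Lj.IsHermitian)
    (ξi ξj : ℝ)
    (hi : P * Li * ρ = (ξi : ℂ) • (P * ρ))
    (hj : P * Lj * ρ = (ξj : ℂ) • (P * ρ)) :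
    ρ * Li * P * Lj * ρ = ρ * Lj * P * Li * ρ := by
  have hi' : ρ * Li * P = (ξi : ℂ) • (ρ * P) := by
    have := congrArg Matrix.conjTranspose hi
    simpa [Matrix.conjTranspose_mul, Matrix.conjTranspose_smul, hρ.1.eq, hP.1.eq,
      hLi.eq, mul_assoc, Complex.star_def, Complex.conj_ofReal] using this
  have hj' : ρ * Lj * P = (ξj : ℂ) • (ρ * P) := by
    have := congrArg Matrix.conjTranspose hj
    simpa [Matrix.conjTranspose_mul, Matrix.conjTranspose_smul, hρ.1.eq, hP.1.eq,
      hLj.eq, mul_assoc, Complex.star_def, Complex.conj_ofReal] using this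
  calc ρ * Li * P * Lj * ρ = (ρ * Li * P) * (Lj * ρ) := by simp only [mul_assoc]
    _ = (ξi : ℂ) • ((ρ * P) * (Lj * ρ)) := by rw [hi', smul_mul_assoc]
    _ = (ξi : ℂ) • (ρ * (P * Lj * ρ)) := by simp only [mul_assoc]
    _ = (ξi : ℂ) • ((ξj : ℂ) • (ρ * (P * ρ))) := by rw [hj, Matrix.mul_smul]
    _ = (ξj : ℂ) • ((ξi : ℂ) • (ρ * (P * ρ))) := by rw [smul_comm]
    _ = (ξj : ℂ) • (ρ * (P * Li * ρ)) := by rw [hi, Matrix.mul_smul]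
    _ = (ξj : ℂ) • ((ρ * P) * (Li * ρ)) := by simp only [mul_assoc]
    _ = (ρ * Lj * P) * (Li * ρ) := by rw [hj', smul_mul_assoc]
    _ = ρ * Lj * P * Li * ρ := by simp only [mul_assoc]
end

section
/- Let ρ be a positive semidefinite n×n complex matrix and let D be a Hermitian n×n complex matrix such that vᴴ D w = 0 for all vectors v, w with ρv = 0 and ρw = 0. Then there exists a Hermitian n×n complex matrix L satisfying Lρ + ρL = 2D. -/
open Matrix
open scoped ComplexOrder

/-- Existence of the symmetric logarithmic derivative: if `D` is Hermitian and
vanishes as a Hermitian form on the kernel of the PSD matrix `ρ`, then there is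
a Hermitian `L` with `L ρ + ρ L = 2 D`. -/
theorem exists_SLD
    {n : ℕ} (ρ D : Matrix (Fin n) (Fin n) ℂ)
    (hρ : ρ.PosSemidef) (hD : D.IsHermitian)
    (hker : ∀ v w : Fin n → ℂ, ρ *ᵥ v = 0 → ρ *ᵥ w = 0 →
      star v ⬝ᵥ (D *ᵥ w) = 0) :
    ∃ L : Matrix (Fin n) (Fin n) ℂ,
      L.IsHermitian ∧ L * ρ + ρ * L = (2 : ℂ) • D := by
  have h := hρ.1
  set U : Matrix (Fin n) (Fin n) ℂ := (h.eigenvectorUnitary : Matrix (Fin n) (Fin n) ℂ) with hUdef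
  have hUU : star U * U = 1 := Unitary.coe_star_mul_self _
  have hUU' : U * star U = 1 := Unitary.coe_mul_star_self _
  set d : Fin n → ℝ := h.eigenvalues with hddef
  have hdnn : ∀ i, 0 ≤ d i := fun i => hρ.eigenvalues_nonneg i
  set Δ : Matrix (Fin n) (Fin n) ℂ := Matrix.diagonal (fun i => (d i : ℂ)) with hΔdef
  have hspec : ρ = U * Δ * star U := by
    have := h.spectral_theorem
    rw [Unitary.conjStarAlgAut_apply] at this
    exact this
  set D' : Matrix (Fin n) (Fin n) ℂ := star U * D * U with hD'def
  have hD' : D'ᴴ = D' := by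
    simp only [hD'def, Matrix.star_eq_conjTranspose, conjTranspose_mul,
      conjTranspose_conjTranspose, hD.eq, mul_assoc]
  have hkey : ∀ i j, d i = 0 → d j = 0 → D' i j = 0 := by
    intro i j hi hj
    have hρi : ρ *ᵥ ⇑(h.eigenvectorBasis i) = 0 := by
      rw [h.mulVec_eigenvectorBasis, show h.eigenvalues i = 0 from hi, zero_smul]
    have hρj : ρ *ᵥ ⇑(h.eigenvectorBasis j) = 0 := by
      rw [h.mulVec_eigenvectorBasis, show h.eigenvalues j = 0 from hj, zero_smul]
    have := hker _ _ hρi hρj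
    rw [← this]
    simp only [hD'def, Matrix.mul_apply, Matrix.mulVec, dotProduct, hUdef,
      Matrix.star_apply, IsHermitian.eigenvectorUnitary_apply, Pi.star_apply,
      Finset.sum_mul, Finset.mul_sum]
    rw [Finset.sum_comm]
    apply Finset.sum_congr rfl
    intro k _
    apply Finset.sum_congr rfl
    intro l _
    ring
  set L' : Matrix (Fin n) (Fin n) ℂ :=
    Matrix.of fun i j => if d i + d j = 0 then 0 else ((2 / (d i + d j) : ℝ) : ℂ) * D' i j
    with hL'def
  have hL' : L'ᴴ = L' := by
    ext i j
    simp only [hL'def, conjTranspose_apply, Matrix.of_apply]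
    rw [add_comm (d j) (d i)]
    split_ifs with hij
    · simp
    · rw [star_mul']
      congr 1
      · simp
      · rw [← conjTranspose_apply, hD']
  have hmain : L' * Δ + Δ * L' = (2 : ℂ) • D' := by
    ext i j
    simp only [Matrix.add_apply, hΔdef, Matrix.mul_diagonal, Matrix.diagonal_mul,
      Matrix.smul_apply, hL'def, Matrix.of_apply, smul_eq_mul]
    split_ifs with hij
    · have hi : d i = 0 := by
        have := hdnn i; have := hdnn j; linarith
      have hj : d j = 0 := by
        have := hdnn i; have := hdnn j; linarith
      rw [hkey i j hi hj]
      simp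
    · have hs : ((d i : ℂ) + (d j : ℂ)) ≠ 0 := by
        intro hc
        apply hij
        have : ((d i + d j : ℝ) : ℂ) = 0 := by push_cast; exact hc
        exact_mod_cast this
      have : ((2 / (d i + d j) : ℝ) : ℂ) = 2 / ((d i : ℂ) + (d j : ℂ)) := by push_cast; ring
      rw [this]
      field_simp
      ring
  refine ⟨U * L' * star U, ?_, ?_⟩
  · show (U * L' * star U)ᴴ = U * L' * star U
    simp only [Matrix.star_eq_conjTranspose, conjTranspose_mul,
      conjTranspose_conjTranspose, hL', mul_assoc]
  · rw [hspec]
    calc U * L' * star U * (U * Δ * star U) + U * Δ * star U * (U * L' * star U)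
        = U * (L' * (star U * U) * Δ) * star U + U * (Δ * (star U * U) * L') * star U := by
          simp only [mul_assoc]
      _ = U * (L' * Δ + Δ * L') * star U := by
          rw [hUU]; simp only [mul_one, Matrix.mul_add, Matrix.add_mul]
      _ = (2 : ℂ) • D := by
          rw [hmain, hD'def]
          rw [Matrix.mul_smul, Matrix.smul_mul]
          congr 1
          calc U * (star U * D * U) * star U = (U * star U) * D * (U * star U) := by
                simp only [mul_assoc]
            _ = D := by rw [hUU']; simp
end

section
/- Let ρ : ℝ → (n×n complex matrices) be differentiable at t₀ with ρ(t) positive semidefinite for all t, and let v, w be vectors with ρ(t₀)v = 0 and ρ(t₀)w = 0. Then vᴴ ρ'(t₀) w = 0. -/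
open Matrix
open scoped ComplexOrder

attribute [local instance] Matrix.frobeniusNormedAddCommGroup Matrix.frobeniusNormedSpace

lemma aux_quad {n : ℕ} (ρ : ℝ → Matrix (Fin n) (Fin n) ℂ)
    (ρ' : Matrix (Fin n) (Fin n) ℂ) (t₀ : ℝ)
    (hderiv : HasDerivAt ρ ρ' t₀)
    (hρ : ∀ t, (ρ t).PosSemidef)
    (u : Fin n → ℂ) (hu : ρ t₀ *ᵥ u = 0) :
    star u ⬝ᵥ (ρ' *ᵥ u) = 0 := by
  set L : Matrix (Fin n) (Fin n) ℂ →ₗ[ℝ] ℂ :=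
    { toFun := fun M => star u ⬝ᵥ (M *ᵥ u)
      map_add' := by intro M N; simp [Matrix.add_mulVec, dotProduct_add]
      map_smul' := by intro c M; simp [Matrix.smul_mulVec, dotProduct_smul] } with hLdef
  have hL : HasDerivAt (fun t => star u ⬝ᵥ (ρ t *ᵥ u)) (star u ⬝ᵥ (ρ' *ᵥ u)) t₀ :=
    L.toContinuousLinearMap.hasFDerivAt.comp_hasDerivAt t₀ hderiv
  have hpos : ∀ t, (0:ℂ) ≤ star u ⬝ᵥ (ρ t *ᵥ u) := fun t => (hρ t).dotProduct_mulVec_nonneg u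
  have him : ∀ t, (star u ⬝ᵥ (ρ t *ᵥ u)).im = 0 := by
    intro t
    have := hpos t
    rw [Complex.le_def] at this
    simpa using this.2.symm
  have hre : ∀ t, 0 ≤ (star u ⬝ᵥ (ρ t *ᵥ u)).re := by
    intro t
    have := hpos t
    rw [Complex.le_def] at this
    simpa using this.1
  have hf0 : star u ⬝ᵥ (ρ t₀ *ᵥ u) = 0 := by rw [hu]; simp
  -- real part
  have hgre : HasDerivAt (fun t => (star u ⬝ᵥ (ρ t *ᵥ u)).re)
      ((star u ⬝ᵥ (ρ' *ᵥ u)).re) t₀ :=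
    Complex.reCLM.hasFDerivAt.comp_hasDerivAt t₀ hL
  have hmin : IsLocalMin (fun t => (star u ⬝ᵥ (ρ t *ᵥ u)).re) t₀ := by
    apply Filter.Eventually.of_forall
    intro t
    simp only [hf0, Complex.zero_re]
    exact hre t
  have hre0 : (star u ⬝ᵥ (ρ' *ᵥ u)).re = 0 := hmin.hasDerivAt_eq_zero hgre
  -- imaginary part
  have hgim : HasDerivAt (fun t => (star u ⬝ᵥ (ρ t *ᵥ u)).im)
      ((star u ⬝ᵥ (ρ' *ᵥ u)).im) t₀ :=
    Complex.imCLM.hasFDerivAt.comp_hasDerivAt t₀ hL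
  have hconst : (fun t => (star u ⬝ᵥ (ρ t *ᵥ u)).im) = fun _ => (0:ℝ) := funext him
  rw [hconst] at hgim
  have him0 : (star u ⬝ᵥ (ρ' *ᵥ u)).im = 0 := hgim.unique (hasDerivAt_const _ _)
  exact Complex.ext hre0 him0

/-- The derivative of a positive semidefinite family of matrices vanishes as a
Hermitian form on the kernel of the family at the given point. -/
theorem deriv_vanishes_on_kernel
    {n : ℕ} (ρ : ℝ → Matrix (Fin n) (Fin n) ℂ)
    (ρ' : Matrix (Fin n) (Fin n) ℂ) (t₀ : ℝ)
    (hderiv : HasDerivAt ρ ρ' t₀)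
    (hρ : ∀ t, (ρ t).PosSemidef)
    (v w : Fin n → ℂ) (hv : ρ t₀ *ᵥ v = 0) (hw : ρ t₀ *ᵥ w = 0) :
    star v ⬝ᵥ (ρ' *ᵥ w) = 0 := by
  have hvv := aux_quad ρ ρ' t₀ hderiv hρ v hv
  have hww := aux_quad ρ ρ' t₀ hderiv hρ w hw
  have h1 : ρ t₀ *ᵥ (v + w) = 0 := by rw [Matrix.mulVec_add, hv, hw, add_zero]
  have h2 : ρ t₀ *ᵥ (v + Complex.I • w) = 0 := by
    rw [Matrix.mulVec_add, Matrix.mulVec_smul, hv, hw, smul_zero, add_zero]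
  have hsum := aux_quad ρ ρ' t₀ hderiv hρ (v + w) h1
  have hsum' := aux_quad ρ ρ' t₀ hderiv hρ (v + Complex.I • w) h2
  have e1 : star v ⬝ᵥ (ρ' *ᵥ w) + star w ⬝ᵥ (ρ' *ᵥ v) = 0 := by
    have : star (v + w) ⬝ᵥ (ρ' *ᵥ (v + w)) =
        star v ⬝ᵥ (ρ' *ᵥ v) + star v ⬝ᵥ (ρ' *ᵥ w) +
        (star w ⬝ᵥ (ρ' *ᵥ v) + star w ⬝ᵥ (ρ' *ᵥ w)) := by
      simp [star_add, Matrix.mulVec_add, dotProduct_add, add_dotProduct]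
      ring
    rw [this, hvv, hww] at hsum
    linear_combination hsum
  have e2 : star v ⬝ᵥ (ρ' *ᵥ w) - star w ⬝ᵥ (ρ' *ᵥ v) = 0 := by
    have : star (v + Complex.I • w) ⬝ᵥ (ρ' *ᵥ (v + Complex.I • w)) =
        star v ⬝ᵥ (ρ' *ᵥ v) + Complex.I * (star v ⬝ᵥ (ρ' *ᵥ w)) +
        (-Complex.I * (star w ⬝ᵥ (ρ' *ᵥ v)) + star w ⬝ᵥ (ρ' *ᵥ w)) := by
      simp [star_add, star_smul, Matrix.mulVec_add, Matrix.mulVec_smul,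
        dotProduct_add, add_dotProduct, dotProduct_smul, smul_dotProduct,
        Complex.conj_I, smul_eq_mul]
      ring_nf
      linear_combination (-1 : ℂ) * (star w ⬝ᵥ (ρ' *ᵥ w)) * Complex.I_sq
    rw [this, hvv, hww] at hsum'
    linear_combination (-Complex.I) * hsum' +
      (star v ⬝ᵥ (ρ' *ᵥ w) - star w ⬝ᵥ (ρ' *ᵥ v)) * Complex.I_sq
  linear_combination (e1 + e2) / 2
end

section
/- Let ψ and π be unit vectors in ℂⁿ with ⟨π, ψ⟩ ≠ 0, and let d₁, …, d_p be vectors in ℂⁿ with ⟨ψ, dᵢ⟩ purely imaginary for each i. Define ρ = ψψᴴ, Π = ππᴴ, Lᵢ = 2(dᵢψᴴ + ψdᵢᴴ), and dᵢ⁰ = dᵢ − ⟨ψ, dᵢ⟩ψ. Then there exist real numbers ξ₁, …, ξ_p with Π Lᵢ ρ = ξᵢ Π ρ for all i, if and only if Im(⟨π, dᵢ⁰⟩ · conj(⟨π, ψ⟩)) = 0 for all i. -/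
open Matrix
open scoped ComplexOrder

private lemma vmv_mul {n : ℕ} (u v x y : Fin n → ℂ) :
    vecMulVec u v * vecMulVec x y = (v ⬝ᵥ x) • vecMulVec u y := by
  ext i j
  simp only [mul_apply, vecMulVec_apply, Matrix.smul_apply, smul_eq_mul, dotProduct,
    Finset.sum_mul]
  exact Finset.sum_congr rfl fun k _ => by ring

/-- Pure-state saturation condition for a regular rank-one projector
(Pezzè et al.): with `ρ = ψψᴴ`, `Π = φφᴴ` (`⟨φ, ψ⟩ ≠ 0`), and
`Lᵢ = 2(dᵢψᴴ + ψdᵢᴴ)`, the proportionality `Π Lᵢ ρ = ξᵢ Π ρ` holds with real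
`ξᵢ` iff `Im(⟨φ, dᵢ⁰⟩ · conj ⟨φ, ψ⟩) = 0` for all `i`, where
`dᵢ⁰ = dᵢ − ⟨ψ, dᵢ⟩ψ`. -/
theorem pure_state_regular_saturation_iff
    {n p : ℕ} (ψ φ : Fin n → ℂ) (d : Fin p → (Fin n → ℂ))
    (hψ : star ψ ⬝ᵥ ψ = 1) (hφ : star φ ⬝ᵥ φ = 1)
    (hreg : star φ ⬝ᵥ ψ ≠ 0)
    (himag : ∀ i, (star ψ ⬝ᵥ d i).re = 0) :
    (∃ ξ : Fin p → ℝ, ∀ i,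
        vecMulVec φ (star φ) * ((2 : ℂ) •
            (vecMulVec (d i) (star ψ) + vecMulVec ψ (star (d i)))) *
          vecMulVec ψ (star ψ) =
        (ξ i : ℂ) • (vecMulVec φ (star φ) * vecMulVec ψ (star ψ))) ↔
    (∀ i, ((star φ ⬝ᵥ (d i - (star ψ ⬝ᵥ d i) • ψ)) *
        (starRingEnd ℂ) (star φ ⬝ᵥ ψ)).im = 0) := by
  set a : ℂ := star φ ⬝ᵥ ψ with ha
  set M : Matrix (Fin n) (Fin n) ℂ := vecMulVec φ (star ψ) with hM
  -- find a nonzero entry of M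
  obtain ⟨j, hj⟩ : ∃ j, (star φ) j * ψ j ≠ 0 := by
    by_contra h
    push_neg at h
    refine hreg (by rw [ha]; exact Finset.sum_eq_zero fun k _ => h k)
  have hMjj : M j j ≠ 0 := by
    have hMval : M j j = φ j * star ψ j := rfl
    rw [hMval]
    intro hc
    apply hj
    rcases mul_eq_zero.mp hc with h1 | h2
    · simp [h1]
    · have : ψ j = 0 := by simpa using congrArg star h2
      simp [this]
  have hconj : ∀ i, star (d i) ⬝ᵥ ψ = starRingEnd ℂ (star ψ ⬝ᵥ d i) := by
    intro i
    simp [dotProduct, map_sum, mul_comm]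
  -- matrix identity for LHS
  have hL : ∀ i,
      vecMulVec φ (star φ) * ((2 : ℂ) •
          (vecMulVec (d i) (star ψ) + vecMulVec ψ (star (d i)))) *
        vecMulVec ψ (star ψ) =
      (2 * (star φ ⬝ᵥ d i + a * starRingEnd ℂ (star ψ ⬝ᵥ d i))) • M := by
    intro i
    rw [mul_smul_comm, smul_mul_assoc, mul_add, add_mul,
      vmv_mul, vmv_mul, smul_mul_assoc, smul_mul_assoc, vmv_mul, vmv_mul,
      hψ, ← hconj]
    rw [smul_smul, smul_smul]
    rw [← ha, ← hM, ← add_smul, smul_smul]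
    ring_nf
  have hR : vecMulVec φ (star φ) * vecMulVec ψ (star ψ) = a • M := by
    rw [vmv_mul, ha, hM]
  have hb : ∀ i, star φ ⬝ᵥ (d i - (star ψ ⬝ᵥ d i) • ψ)
      = star φ ⬝ᵥ d i - (star ψ ⬝ᵥ d i) * a := by
    intro i
    rw [dotProduct_sub, dotProduct_smul, smul_eq_mul, ha]
  have hsmul_iff : ∀ (s t : ℂ), s • M = t • M ↔ s = t := by
    intro s t
    constructor
    · intro h
      have := congrFun (congrFun h j) j
      simp only [Matrix.smul_apply, smul_eq_mul] at this
      exact mul_right_cancel₀ hMjj this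
    · rintro rfl; rfl
  have hcc : ∀ i, starRingEnd ℂ (star ψ ⬝ᵥ d i) = -(star ψ ⬝ᵥ d i) := by
    intro i
    have := himag i
    apply Complex.ext <;> simp [this]
  constructor
  · rintro ⟨ξ, hξ⟩ i
    have h := hξ i
    rw [hL i, hR, smul_smul, hsmul_iff] at h
    rw [hcc i] at h
    rw [hb i]
    have h2 : star φ ⬝ᵥ d i - (star ψ ⬝ᵥ d i) * a = ((ξ i / 2 : ℝ) : ℂ) * a := by
      field_simp
      push_cast
      linear_combination (1/2 : ℂ) * h
    rw [h2, mul_assoc, Complex.mul_conj]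
    simp
  · intro h
    refine ⟨fun i => 2 * (((star φ ⬝ᵥ d i - (star ψ ⬝ᵥ d i) * a) *
        starRingEnd ℂ a).re) / Complex.normSq a, fun i => ?_⟩
    rw [hL i, hR, smul_smul, hsmul_iff, hcc i]
    have hi := h i
    rw [hb i] at hi
    set z : ℂ := star φ ⬝ᵥ d i - (star ψ ⬝ᵥ d i) * a with hz
    have hzr : z * starRingEnd ℂ a = ((z * starRingEnd ℂ a).re : ℂ) := by
      apply Complex.ext <;> simp [hi]
    have hns : (Complex.normSq a : ℂ) ≠ 0 := by
      simpa [Complex.normSq_eq_zero] using hreg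
    have hza : z * (Complex.normSq a : ℂ) = ((z * starRingEnd ℂ a).re : ℂ) * a := by
      calc z * (Complex.normSq a : ℂ) = (z * starRingEnd ℂ a) * a := by
            rw [← Complex.mul_conj]; ring
        _ = ((z * starRingEnd ℂ a).re : ℂ) * a := by nth_rewrite 1 [hzr]; rfl
    have hthis : z = (((z * starRingEnd ℂ a).re : ℂ) / (Complex.normSq a : ℂ)) * a := by
      rw [div_mul_eq_mul_div, eq_div_iff hns]
      linear_combination hza
    have hgoal : 2 * (star φ ⬝ᵥ d i + a * -(star ψ ⬝ᵥ d i)) = 2 * z := by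
      rw [hz]; ring
    rw [hgoal, hthis]
    push_cast
    ring
end

section
/- Let ψ and π be unit vectors in ℂⁿ with ⟨π, ψ⟩ = 0, and let d₁, …, d_p be vectors in ℂⁿ with ⟨π, dⱼ⟩ ≠ 0 for every j. Define ρ = ψψᴴ, Π = ππᴴ, and Lᵢ = 2(dᵢψᴴ + ψdᵢᴴ). Then there exist real numbers η_{ij} with Π Lᵢ ρ = η_{ij} Π Lⱼ ρ for all i, j, if and only if Im(conj(⟨π, dᵢ⟩) · ⟨π, dⱼ⟩) = 0 for all i, j. -/
open Matrix
open scoped ComplexOrder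

lemma mulvv {n : ℕ} (a b c e : Fin n → ℂ) :
    vecMulVec a b * vecMulVec c e = (b ⬝ᵥ c) • vecMulVec a e := by
  ext i j
  simp only [mul_apply, vecMulVec_apply, Matrix.smul_apply, smul_eq_mul, dotProduct,
    Finset.sum_mul]
  exact Finset.sum_congr rfl fun k _ => by ring

lemma key {n : ℕ} (ψ φ v : Fin n → ℂ) (hψ : star ψ ⬝ᵥ ψ = 1)
    (hnull : star φ ⬝ᵥ ψ = 0) :
    vecMulVec φ (star φ) * ((2 : ℂ) •
        (vecMulVec v (star ψ) + vecMulVec ψ (star v))) *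
      vecMulVec ψ (star ψ) = (2 * (star φ ⬝ᵥ v)) • vecMulVec φ (star ψ) := by
  rw [mul_smul_comm, smul_mul_assoc, mul_add, add_mul, mulvv, mulvv,
    smul_mul_assoc, smul_mul_assoc, mulvv, mulvv, hψ, hnull, one_smul,
    zero_smul, add_zero, smul_smul]

/-- Pure-state saturation condition for a null rank-one projector
(Pezzè et al.): with `ρ = ψψᴴ`, `Π = φφᴴ` (`⟨φ, ψ⟩ = 0`, `⟨φ, dⱼ⟩ ≠ 0`), and
`Lᵢ = 2(dᵢψᴴ + ψdᵢᴴ)`, the proportionality `Π Lᵢ ρ = ηᵢⱼ Π Lⱼ ρ` holds with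
real `ηᵢⱼ` iff `Im(conj ⟨φ, dᵢ⟩ · ⟨φ, dⱼ⟩) = 0` for all `i, j`. -/
theorem pure_state_null_saturation_iff
    {n p : ℕ} (ψ φ : Fin n → ℂ) (d : Fin p → (Fin n → ℂ))
    (hψ : star ψ ⬝ᵥ ψ = 1) (hφ : star φ ⬝ᵥ φ = 1)
    (hnull : star φ ⬝ᵥ ψ = 0)
    (hd : ∀ j, star φ ⬝ᵥ d j ≠ 0) :
    (∃ η : Fin p → Fin p → ℝ, ∀ i j,
        vecMulVec φ (star φ) * ((2 : ℂ) •
            (vecMulVec (d i) (star ψ) + vecMulVec ψ (star (d i)))) *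
          vecMulVec ψ (star ψ) =
        (η i j : ℂ) • (vecMulVec φ (star φ) * ((2 : ℂ) •
            (vecMulVec (d j) (star ψ) + vecMulVec ψ (star (d j)))) *
          vecMulVec ψ (star ψ))) ↔
    (∀ i j, ((starRingEnd ℂ) (star φ ⬝ᵥ d i) * (star φ ⬝ᵥ d j)).im = 0) := by
  have hψ0 : ψ ≠ 0 := by rintro rfl; simp at hψ
  have hφ0 : φ ≠ 0 := by rintro rfl; simp at hφ
  obtain ⟨j0, hj0⟩ := Function.ne_iff.mp hψ0
  obtain ⟨i0, hi0⟩ := Function.ne_iff.mp hφ0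
  have hM : vecMulVec φ (star ψ) ≠ 0 := by
    intro h
    have := congrFun (congrFun h i0) j0
    simp only [vecMulVec_apply, Pi.star_apply, Matrix.zero_apply] at this
    rcases mul_eq_zero.mp this with h' | h'
    · exact hi0 (by simpa using h')
    · exact hj0 (by simpa using h')
  have hiff : ∀ (i j : Fin p) (η : ℝ),
      (vecMulVec φ (star φ) * ((2 : ℂ) •
          (vecMulVec (d i) (star ψ) + vecMulVec ψ (star (d i)))) *
        vecMulVec ψ (star ψ) =
      (η : ℂ) • (vecMulVec φ (star φ) * ((2 : ℂ) •
          (vecMulVec (d j) (star ψ) + vecMulVec ψ (star (d j)))) *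
        vecMulVec ψ (star ψ))) ↔
      star φ ⬝ᵥ d i = (η : ℂ) * (star φ ⬝ᵥ d j) := by
    intro i j η
    rw [key ψ φ (d i) hψ hnull, key ψ φ (d j) hψ hnull, smul_smul]
    constructor
    · intro h
      have h2 := smul_left_injective ℂ hM h
      linear_combination h2 / 2
    · intro h
      rw [h]
      congr 1
      ring
  constructor
  · rintro ⟨η, hη⟩ i j
    have h := (hiff i j (η i j)).mp (hη i j)
    rw [h]
    simp only [Complex.mul_im, Complex.mul_re, Complex.conj_re, Complex.conj_im, _root_.map_mul,
      Complex.conj_ofReal, Complex.ofReal_re, Complex.ofReal_im]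
    ring
  · intro h
    refine ⟨fun i j => ((star φ ⬝ᵥ d i) * (starRingEnd ℂ) (star φ ⬝ᵥ d j)).re /
        Complex.normSq (star φ ⬝ᵥ d j), fun i j => (hiff i j _).mpr ?_⟩
    have him : ((star φ ⬝ᵥ d i) * (starRingEnd ℂ) (star φ ⬝ᵥ d j)).im = 0 := by
      have := h i j
      simp only [Complex.mul_im, Complex.conj_re, Complex.conj_im] at this ⊢
      linarith
    have hr : (((((star φ ⬝ᵥ d i) * (starRingEnd ℂ) (star φ ⬝ᵥ d j)).re : ℝ)) : ℂ)
        = (star φ ⬝ᵥ d i) * (starRingEnd ℂ) (star φ ⬝ᵥ d j) :=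
      Complex.ext rfl (by simpa using him.symm)
    have hns : ((Complex.normSq (star φ ⬝ᵥ d j) : ℝ) : ℂ)
        = (star φ ⬝ᵥ d j) * (starRingEnd ℂ) (star φ ⬝ᵥ d j) :=
      (Complex.mul_conj _).symm
    have hcj : star φ ⬝ᵥ d j ≠ 0 := hd j
    have hcjc : (starRingEnd ℂ) (star φ ⬝ᵥ d j) ≠ 0 := by simpa using hcj
    push_cast
    rw [hr, hns]
    field_simp
end
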